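/- In the braid group on n+1 strands, if i_0 + 1 > m + k, then for every g in the standard parabolic subgroup A_I generated by σ_m, …, σ_{m+k−1}, the conjugate a_{i_0}^{-1} g a_{i_0} lies in the subgroup A_{I'} generated by σ_{m+1}, …, σ_{m+k}, and in fact a_{i_0}^{-1} σ_j a_{i_0} = σ_{j+1} for each j ∈ I. -/

import Mathlib

/-- Braid relations on generators σ_1,…,σ_n (0-indexed by `Fin n`). -/
def braidRels (n : ℕ) : Set (FreeGroup (Fin n)) :=
  { r | (∃ i j : Fin n, (i : ℕ) + 2 ≤ (j : ℕ) ∧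
          r = FreeGroup.of i * FreeGroup.of j * (FreeGroup.of i)⁻¹ * (FreeGroup.of j)⁻¹) ∨
        (∃ i j : Fin n, (i : ℕ) + 1 = (j : ℕ) ∧
          r = FreeGroup.of i * FreeGroup.of j * FreeGroup.of i *
              (FreeGroup.of j)⁻¹ * (FreeGroup.of i)⁻¹ * (FreeGroup.of j)⁻¹) }

/-- The braid group on `n+1` strands. -/
abbrev BraidGroup (n : ℕ) := PresentedGroup (braidRels n)

/-- The Artin generator σ_j (1-indexed, `1 ≤ j ≤ n`); junk value `1` outside that range. -/
noncomputable def σb {n : ℕ} (j : ℕ) : BraidGroup n :=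
  if h : 1 ≤ j ∧ j ≤ n then PresentedGroup.of (⟨j - 1, by omega⟩ : Fin n) else 1

/-- a_i = σ_i σ_{i-1} ⋯ σ_1, with a_0 = 1. -/
noncomputable def abr {n : ℕ} : ℕ → BraidGroup n
  | 0 => 1
  | i + 1 => σb (i + 1) * abr i

/-- transposition (i+1, i+2) (1-based) in S_{n+1} -/
def swapGen {n : ℕ} (i : Fin n) : Equiv.Perm (Fin (n + 1)) :=
  Equiv.swap i.castSucc i.succ

lemma swap_disjoint_commute {N : ℕ} {a b c d : Fin N} (h1 : a ≠ c) (h2 : a ≠ d) (h3 : b ≠ c)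
    (h4 : b ≠ d) : Commute (Equiv.swap a b) (Equiv.swap c d) := by
  apply Equiv.Perm.Disjoint.commute
  intro x
  by_cases hxa : x = a
  · subst hxa; right; exact Equiv.swap_apply_of_ne_of_ne h1 h2
  by_cases hxb : x = b
  · subst hxb; right; exact Equiv.swap_apply_of_ne_of_ne h3 h4
  · left; exact Equiv.swap_apply_of_ne_of_ne hxa hxb

lemma swap_braid {N : ℕ} (a b c : Fin N) (hab : a ≠ b) (hbc : b ≠ c) (hac : a ≠ c) :
    Equiv.swap a b * Equiv.swap b c * Equiv.swap a b =
      Equiv.swap b c * Equiv.swap a b * Equiv.swap b c := by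
  have h1 : Equiv.swap a b * Equiv.swap b c * Equiv.swap a b = Equiv.swap a c := by
    rw [Equiv.swap_comm a b, Equiv.swap_comm b c]
    exact Equiv.swap_mul_swap_mul_swap hbc.symm hac.symm
  have h2 : Equiv.swap b c * Equiv.swap a b * Equiv.swap b c = Equiv.swap c a := by
    exact Equiv.swap_mul_swap_mul_swap hab hac
  rw [h1, h2, Equiv.swap_comm]

lemma braid_rels_perm (n : ℕ) : ∀ r ∈ braidRels n, FreeGroup.lift (swapGen (n := n)) r = 1 := by
  rintro r (⟨i, j, hij, rfl⟩ | ⟨i, j, hij, rfl⟩) <;>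
    simp only [map_mul, map_inv, FreeGroup.lift_apply_of]
  · have hc : Commute (swapGen (n := n) i) (swapGen j) := by
      apply swap_disjoint_commute <;>
        exact Fin.ne_of_val_ne (by simp only [Fin.val_succ, Fin.coe_castSucc]; omega)
    rw [hc.eq]; group
  · have : j.castSucc = i.succ := by
      apply Fin.val_injective; simp only [Fin.val_succ, Fin.coe_castSucc]; omega
    have hb := swap_braid (N := n+1) i.castSucc i.succ j.succ
      (Fin.ne_of_val_ne (by simp only [Fin.val_succ, Fin.coe_castSucc]; omega)) (Fin.ne_of_val_ne (by simp only [Fin.val_succ, Fin.coe_castSucc]; omega))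
      (Fin.ne_of_val_ne (by simp only [Fin.val_succ, Fin.coe_castSucc]; omega))
    unfold swapGen
    rw [this, hb]; group

/-- The canonical projection from the braid group onto the symmetric group S_{n+1}. -/
noncomputable def πb {n : ℕ} : BraidGroup n →* Equiv.Perm (Fin (n + 1)) :=
  PresentedGroup.toGroup (braid_rels_perm n)

/-- The standard parabolic subgroup generated by σ_m, …, σ_{m+k-1}. -/
noncomputable def AIb (n m k : ℕ) : Subgroup (BraidGroup n) :=
  Subgroup.closure { x | ∃ j, m ≤ j ∧ j ≤ m + k - 1 ∧ x = σb j }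

lemma rel_one {n : ℕ} {r : FreeGroup (Fin n)} (hr : r ∈ braidRels n) :
    PresentedGroup.mk (braidRels n) r = 1 := by
  rw [PresentedGroup.mk]
  exact (QuotientGroup.eq_one_iff r).mpr (Subgroup.subset_normalClosure hr)

lemma sigma_mk {n : ℕ} {i : ℕ} (hi : 1 ≤ i) (hn : i ≤ n) :
    σb (n := n) i = PresentedGroup.mk (braidRels n) (FreeGroup.of ⟨i-1, by omega⟩) := by
  rw [σb, dif_pos ⟨hi, hn⟩]; rfl

lemma sigma_comm {n : ℕ} {i j : ℕ} (hi : 1 ≤ i) (hj : j ≤ n) (h : i + 2 ≤ j) :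
    σb (n := n) i * σb j = σb j * σb i := by
  have h1 := rel_one (n := n) (r := FreeGroup.of (⟨i-1, by omega⟩ : Fin n) * FreeGroup.of (⟨j-1, by omega⟩ : Fin n)
      * (FreeGroup.of (⟨i-1, by omega⟩ : Fin n))⁻¹ * (FreeGroup.of (⟨j-1, by omega⟩ : Fin n))⁻¹)
    (Or.inl ⟨⟨i-1, by omega⟩, ⟨j-1, by omega⟩, by simp; omega, rfl⟩)
  simp only [map_mul, map_inv] at h1
  rw [mul_inv_eq_one, mul_inv_eq_iff_eq_mul] at h1
  rw [sigma_mk hi (by omega), sigma_mk (n := n) (i := j) (by omega) hj, h1]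

lemma sigma_braid {n : ℕ} {i : ℕ} (hi : 1 ≤ i) (h : i + 1 ≤ n) :
    σb (n := n) i * σb (i+1) * σb i = σb (i+1) * σb i * σb (i+1) := by
  have h1 := rel_one (n := n) (r := FreeGroup.of (⟨i-1, by omega⟩ : Fin n) * FreeGroup.of (⟨i, by omega⟩ : Fin n)
      * FreeGroup.of (⟨i-1, by omega⟩ : Fin n) * (FreeGroup.of (⟨i, by omega⟩ : Fin n))⁻¹
      * (FreeGroup.of (⟨i-1, by omega⟩ : Fin n))⁻¹ * (FreeGroup.of (⟨i, by omega⟩ : Fin n))⁻¹)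
    (Or.inr ⟨⟨i-1, by omega⟩, ⟨i, by omega⟩, by simp; omega, rfl⟩)
  simp only [map_mul, map_inv] at h1
  rw [mul_inv_eq_one, mul_inv_eq_iff_eq_mul, mul_inv_eq_iff_eq_mul] at h1
  rw [sigma_mk hi (by omega), sigma_mk (n := n) (i := i+1) (by omega) h]
  have : (⟨i+1-1, by omega⟩ : Fin n) = ⟨i, by omega⟩ := rfl
  rw [this, h1]

lemma sigma_comm_abr {n : ℕ} {p q : ℕ} (hq : q ≤ n) (h : p + 2 ≤ q) :
    Commute (σb (n := n) q) (abr p) := by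
  induction p with
  | zero => simp [abr, Commute.one_right]
  | succ p ih =>
    rw [abr]
    have h1 : Commute (σb (n := n) q) (σb (p+1)) :=
      (sigma_comm (i := p+1) (j := q) (by omega) hq (by omega)).symm
    exact Commute.mul_right h1 (ih (by omega))

lemma sigma_mul_abr {n : ℕ} : ∀ i j : ℕ, 1 ≤ j → j + 1 ≤ i → i ≤ n →
    σb (n := n) j * abr i = abr i * σb (j+1) := by
  intro i
  induction i with
  | zero => omega
  | succ i ih =>
    intro j hj hji hin
    rcases Nat.lt_or_ge (j+1) (i+1) with hc | hc
    · -- j + 1 ≤ i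
      rw [abr, ← mul_assoc, sigma_comm hj (by omega) (by omega), mul_assoc,
        ih j hj (by omega) (by omega), ← mul_assoc]
    · -- j = i
      have hji' : j = i := by omega
      subst hji'
      have hab : abr (n := n) j = σb j * abr (j-1) := by
        cases j with
        | zero => omega
        | succ p => simp [abr]
      rw [abr, hab, ← mul_assoc, ← mul_assoc, sigma_braid hj hin]
      have hcomm := sigma_comm_abr (n := n) (p := j-1) (q := j+1) hin (by omega)
      rw [mul_assoc (σb (j+1) * σb j), hcomm.eq, ← mul_assoc, ← mul_assoc,
        mul_assoc (σb (j+1)), ← hab]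

theorem abr_conj_right (n m k i0 : ℕ) (hm : 1 ≤ m) (hk : 1 ≤ k) (hmk : m + k ≤ n)
    (hlo : m + k ≤ i0) (hhi : i0 ≤ n) :
    (∀ j, m ≤ j → j ≤ m + k - 1 → (abr (n := n) i0)⁻¹ * σb j * abr i0 = σb (j + 1)) ∧
    ∀ g ∈ AIb n m k, (abr (n := n) i0)⁻¹ * g * abr i0 ∈ AIb n (m + 1) k := by
  have key : ∀ j, m ≤ j → j ≤ m + k - 1 →
      (abr (n := n) i0)⁻¹ * σb j * abr i0 = σb (j + 1) := by
    intro j hj1 hj2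
    have h := sigma_mul_abr (n := n) i0 j (by omega) (by omega) hhi
    rw [mul_assoc, h, ← mul_assoc, inv_mul_cancel, one_mul]
  refine ⟨key, fun g hg => ?_⟩
  refine Subgroup.closure_induction (p := fun g _ =>
      (abr (n := n) i0)⁻¹ * g * abr i0 ∈ AIb n (m + 1) k) ?_ ?_ ?_ ?_ hg
  · rintro x ⟨j, hj1, hj2, rfl⟩
    rw [key j hj1 hj2]
    exact Subgroup.subset_closure ⟨j + 1, by omega, by omega, rfl⟩
  · simpa using one_mem (AIb n (m + 1) k)
  · intro x y _ _ hx hy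
    have e : (abr (n := n) i0)⁻¹ * (x * y) * abr i0 =
        ((abr i0)⁻¹ * x * abr i0) * ((abr i0)⁻¹ * y * abr i0) := by group
    rw [e]; exact mul_mem hx hy
  · intro x _ hx
    have e : (abr (n := n) i0)⁻¹ * x⁻¹ * abr i0 = ((abr i0)⁻¹ * x * abr i0)⁻¹ := by group
    rw [e]; exact inv_mem hx
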